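/- arXiv:1711.05192 — 2 statements merged into one kernel-verified Lean document; each statement's English description precedes it below -/
import Mathlib

section
/- Let 𝓑 be a finite family of pairwise disjoint balls in ℝ², let 𝓒 be the subfamily of balls contained in Ω, and let α, β be finite Radon measures on Ω such that supp α ⊂ ⋃_{B∈𝓒} B, supp β ⊂ ⋃_{B∈𝓑} B, and α(B) = β(B) for every B ∈ 𝓒. Then ‖α − β‖_flat ≤ C · Rad(𝓑) · (|α| + |β|)(Ω), where Rad(𝓑) is the sum of the radii of the balls in 𝓑 and C is a universal constant (C = 2 works). -/
open MeasureTheory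

/-- Lemma on flat-norm estimates for measures concentrated on small
balls: `𝓑 = {B(cᵢ, rᵢ)}` is a finite family of pairwise disjoint balls, `𝓒` the
subfamily of balls contained in `Ω`; `α = αp − αn` and `β = βp − βn` (Jordan
decompositions) are finite Radon measures with `supp α ⊆ ⋃_{B∈𝓒} B`,
`supp β ⊆ ⋃_{B∈𝓑} B` and `α(B) = β(B)` for `B ∈ 𝓒`.  Then
`‖α − β‖_flat ≤ 2 · Rad(𝓑) · (|α| + |β|)(Ω)`, tested on any `ψ ∈ C_c^{0,1}(Ω)`
with `sup|ψ| ≤ 1` and `Lip(ψ) ≤ 1`. -/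
theorem flat_estimate_measures_on_balls
    (Ω : Set ℂ) (hΩ : IsOpen Ω) (hb : Bornology.IsBounded Ω)
    {ι : Type} [Fintype ι] (c : ι → ℂ) (r : ι → ℝ) (hr : ∀ i, 0 < r i)
    (hdisj : Pairwise fun i j => Disjoint (Metric.ball (c i) (r i)) (Metric.ball (c j) (r j)))
    (𝓒 : Set ι) (h𝓒 : ∀ i, i ∈ 𝓒 ↔ Metric.ball (c i) (r i) ⊆ Ω)
    (αp αn βp βn : Measure ℂ)
    [IsFiniteMeasure αp] [IsFiniteMeasure αn] [IsFiniteMeasure βp] [IsFiniteMeasure βn]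
    (hα : αp.MutuallySingular αn) (hβ : βp.MutuallySingular βn)
    (hαsupp : αp (⋃ i ∈ 𝓒, Metric.ball (c i) (r i))ᶜ = 0 ∧
              αn (⋃ i ∈ 𝓒, Metric.ball (c i) (r i))ᶜ = 0)
    (hβsupp : βp (⋃ i, Metric.ball (c i) (r i))ᶜ = 0 ∧
              βn (⋃ i, Metric.ball (c i) (r i))ᶜ = 0)
    (heq : ∀ i ∈ 𝓒, (αp (Metric.ball (c i) (r i))).toReal - (αn (Metric.ball (c i) (r i))).toReal
        = (βp (Metric.ball (c i) (r i))).toReal - (βn (Metric.ball (c i) (r i))).toReal)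
    (ψ : ℂ → ℝ) (hψlip : LipschitzWith 1 ψ) (hψb : ∀ x, |ψ x| ≤ 1)
    (hψsupp : tsupport ψ ⊆ Ω) :
    |(∫ x, ψ x ∂αp - ∫ x, ψ x ∂αn) - (∫ x, ψ x ∂βp - ∫ x, ψ x ∂βn)| ≤
      2 * (∑ i, r i) * ((αp Ω).toReal + (αn Ω).toReal + (βp Ω).toReal + (βn Ω).toReal) := by
  classical
  set B : ι → Set ℂ := fun i => Metric.ball (c i) (r i) with hB
  have hcont : Continuous ψ := hψlip.continuous
  have hcs : HasCompactSupport ψ := by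
    refine Metric.isCompact_of_isClosed_isBounded (isClosed_tsupport ψ) (hb.subset hψsupp)
  have hψz : ∀ x ∉ Ω, ψ x = 0 := fun x hx =>
    image_eq_zero_of_notMem_tsupport (fun h => hx (hψsupp h))
  -- measures of balls not in 𝓒 vanish for α
  have hzero : ∀ i ∉ 𝓒, B i ⊆ (⋃ j ∈ 𝓒, B j)ᶜ := by
    intro i hi x hx
    simp only [Set.mem_compl_iff, Set.mem_iUnion, not_exists]
    rintro j hj hxj
    have hij : j ≠ i := fun h => hi (h ▸ hj)
    exact Set.disjoint_left.1 (hdisj hij) hxj hx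
  -- the union
  have hU : (⋃ i, B i)ᶜ ⊆ (⋃ i ∈ 𝓒, B i)ᶜ := by
    apply Set.compl_subset_compl.2
    exact Set.iUnion₂_subset fun i _ => Set.subset_iUnion B i
  have hint : ∀ (μ : Measure ℂ) [IsFiniteMeasure μ], Integrable ψ μ := fun μ _ =>
    hcont.integrable_of_hasCompactSupport hcs
  -- decomposition of integrals as sums over balls
  have hdec : ∀ (μ : Measure ℂ) [IsFiniteMeasure μ], μ (⋃ i, B i)ᶜ = 0 →
      ∫ x, ψ x ∂μ = ∑ i, ∫ x in B i, ψ x ∂μ := by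
    intro μ _ hμ
    have h1 : μ.restrict (⋃ i, B i) = μ :=
      Measure.restrict_eq_self_of_ae_mem (by
        rw [ae_iff]
        have h2 : {x | x ∉ ⋃ i, B i} = (⋃ i, B i)ᶜ := rfl
        rw [h2]; exact hμ)
    calc ∫ x, ψ x ∂μ = ∫ x in ⋃ i, B i, ψ x ∂μ := by rw [h1]
      _ = ∑' i, ∫ x in B i, ψ x ∂μ :=
          integral_iUnion (fun i => Metric.isOpen_ball.measurableSet) hdisj
            ((hint μ).integrableOn)
      _ = ∑ i, ∫ x in B i, ψ x ∂μ := tsum_fintype _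
  have hαp0 : αp (⋃ i, B i)ᶜ = 0 := measure_mono_null hU hαsupp.1
  have hαn0 : αn (⋃ i, B i)ᶜ = 0 := measure_mono_null hU hαsupp.2
  set M : ℝ := (αp Ω).toReal + (αn Ω).toReal + (βp Ω).toReal + (βn Ω).toReal with hM
  have hMnn : ∀ (μ : Measure ℂ) [IsFiniteMeasure μ], (0:ℝ) ≤ (μ Ω).toReal :=
    fun μ _ => ENNReal.toReal_nonneg
  -- per-ball bound
  set F : ι → ℝ := fun i =>
    (∫ x in B i, ψ x ∂αp - ∫ x in B i, ψ x ∂αn) -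
    (∫ x in B i, ψ x ∂βp - ∫ x in B i, ψ x ∂βn) with hF
  have hball : ∀ (μ : Measure ℂ) [IsFiniteMeasure μ], ∀ (s : Set ℂ), s ⊆ Ω →
      (μ s).toReal ≤ (μ Ω).toReal := by
    intro μ _ s hs
    exact ENNReal.toReal_mono (measure_ne_top μ Ω) (measure_mono hs)
  have hFbound : ∀ i, |F i| ≤ 2 * r i * M := by
    intro i
    by_cases hi : i ∈ 𝓒
    · -- ball inside Ω; use oscillation around center and mass equality
      have hsub : B i ⊆ Ω := (h𝓒 i).1 hi
      have key : ∀ (μ : Measure ℂ) [IsFiniteMeasure μ],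
          ∫ x in B i, ψ x ∂μ =
            (∫ x in B i, (ψ x - ψ (c i)) ∂μ) + (μ (B i)).toReal * ψ (c i) := by
        intro μ _
        rw [integral_sub ((hint μ).integrableOn) (integrable_const _),
          setIntegral_const, smul_eq_mul, measureReal_def]
        ring
      have osc : ∀ (μ : Measure ℂ) [IsFiniteMeasure μ],
          |∫ x in B i, (ψ x - ψ (c i)) ∂μ| ≤ r i * (μ (B i)).toReal := by
        intro μ _
        have := norm_setIntegral_le_of_norm_le_const (μ := μ) (s := B i)
          (f := fun x => ψ x - ψ (c i)) (C := r i) (measure_lt_top μ _)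
          (fun x hx => by
            rw [Real.norm_eq_abs]
            have h1 : dist (ψ x) (ψ (c i)) ≤ dist x (c i) := by
              simpa using hψlip.dist_le_mul x (c i)
            rw [Real.dist_eq] at h1
            exact h1.trans (le_of_lt (Metric.mem_ball.1 hx)))
        simpa [measureReal_def] using this
      have heqi := heq i hi
      have hFi : F i =
          (∫ x in B i, (ψ x - ψ (c i)) ∂αp - ∫ x in B i, (ψ x - ψ (c i)) ∂αn) -
          (∫ x in B i, (ψ x - ψ (c i)) ∂βp - ∫ x in B i, (ψ x - ψ (c i)) ∂βn) := by
        rw [hF]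
        simp only [key αp, key αn, key βp, key βn]
        have : ((αp (B i)).toReal - (αn (B i)).toReal) * ψ (c i)
            = ((βp (B i)).toReal - (βn (B i)).toReal) * ψ (c i) := by rw [heqi]
        nlinarith [this]
      rw [hFi]
      have h4 : |(∫ x in B i, (ψ x - ψ (c i)) ∂αp - ∫ x in B i, (ψ x - ψ (c i)) ∂αn) -
          (∫ x in B i, (ψ x - ψ (c i)) ∂βp - ∫ x in B i, (ψ x - ψ (c i)) ∂βn)| ≤
          r i * (αp (B i)).toReal + r i * (αn (B i)).toReal +
          r i * (βp (B i)).toReal + r i * (βn (B i)).toReal := by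
        have := osc αp; have := osc αn; have := osc βp; have := osc βn
        have a1 := osc αp; have a2 := osc αn; have a3 := osc βp; have a4 := osc βn
        calc _ ≤ |∫ x in B i, (ψ x - ψ (c i)) ∂αp| + |∫ x in B i, (ψ x - ψ (c i)) ∂αn|
              + (|∫ x in B i, (ψ x - ψ (c i)) ∂βp| + |∫ x in B i, (ψ x - ψ (c i)) ∂βn|) := by
              refine (abs_sub _ _).trans ?_
              gcongr <;> exact abs_sub _ _
          _ ≤ _ := by
              have b1 := osc αp; have b2 := osc αn; have b3 := osc βp; have b4 := osc βn
              linarith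
      refine h4.trans ?_
      have c1 := hball αp (B i) hsub
      have c2 := hball αn (B i) hsub
      have c3 := hball βp (B i) hsub
      have c4 := hball βn (B i) hsub
      have hri := (hr i).le
      nlinarith [hMnn αp, hMnn αn, hMnn βp, hMnn βn]
    · -- ball not inside Ω: α gives no mass; ψ is small on B i ∩ Ω
      have hα1 : αp (B i) = 0 := measure_mono_null (hzero i hi) hαsupp.1
      have hα2 : αn (B i) = 0 := measure_mono_null (hzero i hi) hαsupp.2
      have e1 : ∫ x in B i, ψ x ∂αp = 0 := by
        rw [Measure.restrict_eq_zero.2 hα1, integral_zero_measure]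
      have e2 : ∫ x in B i, ψ x ∂αn = 0 := by
        rw [Measure.restrict_eq_zero.2 hα2, integral_zero_measure]
      -- a point of B i outside Ω
      obtain ⟨x₀, hx₀B, hx₀Ω⟩ : ∃ x₀, x₀ ∈ B i ∧ x₀ ∉ Ω := by
        by_contra h
        push_neg at h
        exact hi ((h𝓒 i).2 h)
      have hψsmall : ∀ x ∈ B i, |ψ x| ≤ 2 * r i := by
        intro x hx
        have h0 : ψ x₀ = 0 := hψz x₀ hx₀Ω
        have h1 : dist (ψ x) (ψ x₀) ≤ dist x x₀ := by
          simpa using hψlip.dist_le_mul x x₀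
        have h2 : dist x x₀ ≤ dist x (c i) + dist x₀ (c i) := dist_triangle_right _ _ _
        have h3 : dist x (c i) < r i := Metric.mem_ball.1 hx
        have h4 : dist x₀ (c i) < r i := Metric.mem_ball.1 hx₀B
        rw [Real.dist_eq, h0, sub_zero] at h1
        linarith
      have hbet : ∀ (μ : Measure ℂ) [IsFiniteMeasure μ],
          |∫ x in B i, ψ x ∂μ| ≤ 2 * r i * (μ Ω).toReal := by
        intro μ _
        have hsplit : (∫ x in B i ∩ Ω, ψ x ∂μ) + (∫ x in B i \ Ω, ψ x ∂μ)
            = ∫ x in B i, ψ x ∂μ :=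
          integral_inter_add_diff hΩ.measurableSet ((hint μ).integrableOn)
        have hz : ∫ x in B i \ Ω, ψ x ∂μ = 0 :=
          setIntegral_eq_zero_of_forall_eq_zero fun x hx => hψz x hx.2
        have hle : |∫ x in B i ∩ Ω, ψ x ∂μ| ≤ 2 * r i * (μ (B i ∩ Ω)).toReal := by
          have := norm_setIntegral_le_of_norm_le_const (μ := μ) (s := B i ∩ Ω)
            (f := ψ) (C := 2 * r i) (measure_lt_top μ _)
            (fun x hx => by rw [Real.norm_eq_abs]; exact hψsmall x hx.1)
          simpa [measureReal_def] using this
        rw [← hsplit, hz, add_zero]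
        refine hle.trans ?_
        have := hball μ (B i ∩ Ω) Set.inter_subset_right
        nlinarith [(hr i).le]
      have hb1 := hbet βp
      have hb2 := hbet βn
      have hFi : F i = -(∫ x in B i, ψ x ∂βp - ∫ x in B i, ψ x ∂βn) := by
        rw [hF]; simp [e1, e2]
      rw [hFi, abs_neg]
      have : |(∫ x in B i, ψ x ∂βp) - ∫ x in B i, ψ x ∂βn|
          ≤ |∫ x in B i, ψ x ∂βp| + |∫ x in B i, ψ x ∂βn| := abs_sub _ _
      have hri := (hr i).le
      nlinarith [hMnn αp, hMnn αn, hMnn βp, hMnn βn]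
  -- sum up
  have hLHS : (∫ x, ψ x ∂αp - ∫ x, ψ x ∂αn) - (∫ x, ψ x ∂βp - ∫ x, ψ x ∂βn)
      = ∑ i, F i := by
    rw [hdec αp hαp0, hdec αn hαn0, hdec βp hβsupp.1, hdec βn hβsupp.2, hF]
    rw [← Finset.sum_sub_distrib, ← Finset.sum_sub_distrib, ← Finset.sum_sub_distrib]
  rw [hLHS]
  calc |∑ i, F i| ≤ ∑ i, |F i| := Finset.abs_sum_le_sum_abs _ _
    _ ≤ ∑ i, 2 * r i * M := Finset.sum_le_sum fun i _ => hFbound i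
    _ = 2 * (∑ i, r i) * M := by
        rw [Finset.mul_sum, Finset.sum_mul]
end

section
/- If u ∈ H¹(A; ℝ² \ B_α) for some α > 0, where A ⊂ ℝ² is open bounded with Lipschitz boundary and simply connected, then deg(u, ∂A) = 0. -/
open Real

namespace Deg14

/-- `p` admits a logarithm-lift on `[0,1]` with equal endpoint values. -/
def WindZero (p : ℝ → ℂ) : Prop :=
  ∃ L : ℝ → ℂ, ContinuousOn L (Set.Icc 0 1) ∧
    (∀ t ∈ Set.Icc (0:ℝ) 1, Complex.exp (L t) = p t) ∧ L 1 = L 0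

lemma windZero_congr {p q : ℝ → ℂ} (h : ∀ t ∈ Set.Icc (0:ℝ) 1, p t = q t) :
    WindZero p → WindZero q := by
  rintro ⟨L, hL, he, h10⟩
  exact ⟨L, hL, fun t ht => (he t ht).trans (h t ht), h10⟩

lemma windZero_const (c : ℂ) (hc : c ≠ 0) : WindZero (fun _ => c) :=
  ⟨fun _ => Complex.log c, continuousOn_const, fun _ _ => Complex.exp_log hc, rfl⟩

/-- a continuous choice of `2πik` on `[0,1]` has equal endpoints -/
lemma endpoints_eq {D : ℝ → ℂ} (hD : ContinuousOn D (Set.Icc 0 1))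
    (h1 : ∀ t ∈ Set.Icc (0:ℝ) 1, Complex.exp (D t) = 1) : D 1 = D 0 := by
  have h2 : ∀ t ∈ Set.Icc (0:ℝ) 1, ∃ n : ℤ, D t = n * (2 * π * Complex.I) :=
    fun t ht => Complex.exp_eq_one_iff.1 (h1 t ht)
  have h0m : (0:ℝ) ∈ Set.Icc (0:ℝ) 1 := by norm_num
  have h1m : (1:ℝ) ∈ Set.Icc (0:ℝ) 1 := by norm_num
  obtain ⟨n0, hn0⟩ := h2 0 h0m
  obtain ⟨n1, hn1⟩ := h2 1 h1m
  have him : ∀ n : ℤ, ((n : ℂ) * (2 * π * Complex.I)).im = n * (2 * π) := by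
    intro n; simp [Complex.mul_im]
  set g : ℝ → ℝ := fun t => (D t).im with hg
  have hgc : ContinuousOn g (Set.Icc 0 1) := Complex.continuous_im.comp_continuousOn hD
  have hfind : ∀ c : ℝ, min (g 0) (g 1) ≤ c → c ≤ max (g 0) (g 1) →
      ∃ t ∈ Set.Icc (0:ℝ) 1, g t = c := by
    intro c hc1 hc2
    rcases le_total (g 0) (g 1) with h | h
    · have hmem : c ∈ Set.Icc (g 0) (g 1) :=
        Set.mem_Icc.2 ⟨by rwa [min_eq_left h] at hc1, by rwa [max_eq_right h] at hc2⟩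
      obtain ⟨t, ht, hgt⟩ := intermediate_value_Icc (by norm_num : (0:ℝ) ≤ 1) hgc hmem
      exact ⟨t, ht, hgt⟩
    · have hmem : c ∈ Set.Icc (g 1) (g 0) :=
        Set.mem_Icc.2 ⟨by rwa [min_eq_right h] at hc1, by rwa [max_eq_left h] at hc2⟩
      obtain ⟨t, ht, hgt⟩ := intermediate_value_Icc' (by norm_num : (0:ℝ) ≤ 1) hgc hmem
      exact ⟨t, ht, hgt⟩
  have key : n1 = n0 := by
    by_contra hne
    have e0 : g 0 = (n0:ℝ) * (2*π) := by rw [hg]; simp only [hn0, him]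
    have e1 : g 1 = (n1:ℝ) * (2*π) := by rw [hg]; simp only [hn1, him]
    set m0 : ℤ := min n0 n1 with hm0
    set m1 : ℤ := max n0 n1 with hm1
    have hcast0 : ((m0:ℤ):ℝ) = min (n0:ℝ) (n1:ℝ) := by push_cast [hm0]; simp
    have hcast1 : ((m1:ℤ):ℝ) = max (n0:ℝ) (n1:ℝ) := by push_cast [hm1]; simp
    have hlt : (m0:ℝ) + 1 ≤ (m1:ℝ) := by
      have : m0 < m1 := by
        rcases lt_or_gt_of_ne hne with h | h
        · rw [hm0, hm1, min_eq_right h.le, max_eq_left h.le]; exact h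
        · rw [hm0, hm1, min_eq_left h.le, max_eq_right h.le]; exact h
      exact_mod_cast this
    have hming : min (g 0) (g 1) = (m0:ℝ) * (2*π) := by
      rw [e0, e1, hcast0]
      rcases le_total (n0:ℝ) (n1:ℝ) with h | h
      · rw [min_eq_left h, min_eq_left (by nlinarith [Real.pi_pos] : (n0:ℝ)*(2*π) ≤ (n1:ℝ)*(2*π))]
      · rw [min_eq_right h, min_eq_right (by nlinarith [Real.pi_pos] : (n1:ℝ)*(2*π) ≤ (n0:ℝ)*(2*π))]
    have hmaxg : max (g 0) (g 1) = (m1:ℝ) * (2*π) := by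
      rw [e0, e1, hcast1]
      rcases le_total (n0:ℝ) (n1:ℝ) with h | h
      · rw [max_eq_right h, max_eq_right (by nlinarith [Real.pi_pos] : (n0:ℝ)*(2*π) ≤ (n1:ℝ)*(2*π))]
      · rw [max_eq_left h, max_eq_left (by nlinarith [Real.pi_pos] : (n1:ℝ)*(2*π) ≤ (n0:ℝ)*(2*π))]
    obtain ⟨t, ht, hgt⟩ := hfind ((2*(m0:ℝ)+1) * π)
      (by rw [hming]; nlinarith [Real.pi_pos])
      (by rw [hmaxg]; nlinarith [Real.pi_pos])
    obtain ⟨m, hm⟩ := h2 t ht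
    rw [hg] at hgt
    simp only [hm, him] at hgt
    have h2m : (2*(m:ℝ)) * π = (2*(m0:ℝ) + 1) * π := by ring_nf; ring_nf at hgt; linarith
    have : (2*(m:ℝ)) = 2*(m0:ℝ) + 1 := mul_right_cancel₀ Real.pi_ne_zero h2m
    have : (2*m : ℤ) = 2*m0+1 := by exact_mod_cast this
    omega
  rw [hn0, hn1, key]

/-- stability of `WindZero` under perturbations smaller than `‖p‖` -/
lemma windZero_of_close {p q : ℝ → ℂ}
    (hp : ContinuousOn p (Set.Icc 0 1)) (hq : ContinuousOn q (Set.Icc 0 1))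
    (hp10 : p 1 = p 0) (hq10 : q 1 = q 0)
    (hclose : ∀ t ∈ Set.Icc (0:ℝ) 1, ‖q t - p t‖ < ‖p t‖) :
    WindZero p → WindZero q := by
  rintro ⟨L, hL, he, h10⟩
  have hpne : ∀ t ∈ Set.Icc (0:ℝ) 1, p t ≠ 0 := by
    intro t ht h
    have h2 := hclose t ht
    rw [h] at h2
    simp only [sub_zero, norm_zero] at h2
    exact absurd h2 (by positivity : (0:ℝ) ≤ ‖q t‖).not_gt
  have hqne : ∀ t ∈ Set.Icc (0:ℝ) 1, q t ≠ 0 := by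
    intro t ht h
    have h2 := hclose t ht
    rw [h] at h2
    simp only [zero_sub, norm_neg] at h2
    exact absurd h2 (lt_irrefl _)
  set r : ℝ → ℂ := fun t => q t / p t with hr
  have hrne : ∀ t ∈ Set.Icc (0:ℝ) 1, r t ≠ 0 :=
    fun t ht => div_ne_zero (hqne t ht) (hpne t ht)
  have hrslit : ∀ t ∈ Set.Icc (0:ℝ) 1, r t ∈ Complex.slitPlane := by
    intro t ht
    have h1 : ‖r t - 1‖ < 1 := by
      have hpn : ‖p t‖ ≠ 0 := fun h => hpne t ht (norm_eq_zero.1 h)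
      have heq : r t - 1 = (q t - p t) / p t := by
        rw [hr]; exact div_sub_one (hpne t ht)
      rw [heq, norm_div]
      rw [div_lt_one (lt_of_le_of_ne (norm_nonneg _) (Ne.symm hpn))]
      exact hclose t ht
    refine Or.inl ?_
    have h2 : |(r t - 1).re| ≤ ‖r t - 1‖ := Complex.abs_re_le_norm _
    have h3 : (r t - 1).re = (r t).re - 1 := by simp
    rw [h3] at h2
    have := abs_lt.1 (lt_of_le_of_lt h2 h1)
    linarith [this.1]
  have hrcont : ContinuousOn r (Set.Icc 0 1) := hq.div hp hpne
  refine ⟨fun t => L t + Complex.log (r t), hL.add (hrcont.clog hrslit), ?_, ?_⟩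
  · intro t ht
    rw [Complex.exp_add, he t ht, Complex.exp_log (hrne t ht), hr]
    rw [mul_comm]
    exact div_mul_cancel₀ _ (hpne t ht)
  · have hr10 : r 1 = r 0 := by rw [hr]; simp only [hp10, hq10]
    show L 1 + Complex.log (r 1) = L 0 + Complex.log (r 0)
    rw [hr10, h10]

end Deg14


/-- if `u ∈ H¹(A; ℝ² \ B_α)` with `α > 0`, where `A ⊆ ℝ² ≃ ℂ` is
open, bounded and simply connected (with Lipschitz boundary, so that its
closure is simply connected as well), then `deg(u, ∂A) = 0`.  The degree is
computed as the winding number `(1/2π) ∮_{∂A} j(u/|u|)·τ dH¹`, expressed along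
any `C¹` loop `γ` (of period `1`) running in `closure A ⊇ ∂A`. -/
theorem degree_zero_of_nonvanishing (A : Set ℂ) (hA : IsOpen A)
    (hb : Bornology.IsBounded A) (hsc : SimplyConnectedSpace (closure A))
    (α : ℝ) (hα : 0 < α)
    (u : ℂ → ℂ) (U : Set ℂ) (hU : IsOpen U) (hUA : closure A ⊆ U)
    (hu : ContDiffOn ℝ 1 u U) (hlow : ∀ x ∈ closure A, α ≤ ‖u x‖)
    (γ : ℝ → ℂ) (hγ : ContDiff ℝ 1 γ) (hper : Function.Periodic γ 1)
    (hrange : Set.range γ ⊆ closure A) (hbdry : frontier A ⊆ Set.range γ) :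
    (1 / (2 * π)) * (∫ t in (0:ℝ)..1,
        ((starRingEnd ℂ) (u (γ t) / (‖u (γ t)‖ : ℂ)) *
          deriv (fun s : ℝ => u (γ s) / (‖u (γ s)‖ : ℂ)) t).im) = 0 := by
  have hmemA : ∀ t : ℝ, γ t ∈ closure A := fun t => hrange (Set.mem_range_self t)
  have hmemU : ∀ t : ℝ, γ t ∈ U := fun t => hUA (hmemA t)
  set w : ℝ → ℂ := fun t => u (γ t) with hw
  have hwC : ContDiff ℝ 1 w := by
    rw [contDiff_iff_contDiffAt]
    intro t
    exact (hu.contDiffAt (hU.mem_nhds (hmemU t))).comp t hγ.contDiffAt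
  have hw0 : ∀ t, w t ≠ 0 := by
    intro t h
    have h1 := hlow _ (hmemA t)
    rw [show u (γ t) = w t from rfl, h, norm_zero] at h1
    linarith
  have hγ10 : γ 1 = γ 0 := by simpa using hper 0
  have hw10 : w 1 = w 0 := by rw [hw]; simp [hγ10]
  have hdw : Continuous (deriv w) := hwC.continuous_deriv le_rfl
  have hwd : ∀ t, HasDerivAt w (deriv w t) t :=
    fun t => ((hwC.differentiable one_ne_zero) t).hasDerivAt
  set f : ℝ → ℂ := fun t => deriv w t / w t with hf
  have hfc : Continuous f := hdw.div (hwC.continuous) hw0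
  set ψ : ℝ → ℂ := fun t => Complex.log (w 0) + ∫ s in (0:ℝ)..t, f s with hψ
  have hψd : ∀ t, HasDerivAt ψ (f t) t := by
    intro t
    have h1 : HasDerivAt (fun x => ∫ s in (0:ℝ)..x, f s) (f t) t :=
      intervalIntegral.integral_hasDerivAt_right (hfc.intervalIntegrable _ _)
        (hfc.stronglyMeasurableAtFilter _ _) hfc.continuousAt
    simpa [hψ] using h1.const_add (Complex.log (w 0))
  have hψc : Continuous ψ := by
    have : Differentiable ℝ ψ := fun t => (hψd t).differentiableAt
    exact this.continuous
  -- exp ∘ ψ = w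
  have hexp : ∀ t, Complex.exp (ψ t) = w t := by
    have hzero : ∀ t, HasDerivAt (fun s => w s * Complex.exp (-ψ s)) 0 t := by
      intro t
      have h1 : HasDerivAt (fun s => Complex.exp (-ψ s)) (Complex.exp (-ψ t) * (-f t)) t :=
        ((hψd t).neg).cexp
      have h2 := (hwd t).mul h1
      refine h2.congr_deriv ?_
      rw [hf]
      have hwt := hw0 t
      have hkey : w t * (Complex.exp (-ψ t) * -(deriv w t / w t))
          = -(deriv w t * Complex.exp (-ψ t)) := by
        field_simp
      rw [hkey]
      ring
    have hconst : ∀ t, w t * Complex.exp (-ψ t) = w 0 * Complex.exp (-ψ 0) := by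
      intro t
      have hdiff : Differentiable ℝ (fun s => w s * Complex.exp (-ψ s)) :=
        fun s => (hzero s).differentiableAt
      exact is_const_of_deriv_eq_zero hdiff (fun s => (hzero s).deriv) t 0
    have hψ0 : ψ 0 = Complex.log (w 0) := by
      rw [hψ]; simp [intervalIntegral.integral_same]
    intro t
    have h3 := hconst t
    rw [hψ0] at h3
    have hE : Complex.exp (-(Complex.log (w 0))) = (w 0)⁻¹ := by
      rw [Complex.exp_neg, Complex.exp_log (hw0 0)]
    rw [hE, mul_inv_cancel₀ (hw0 0), Complex.exp_neg] at h3
    exact ((mul_inv_eq_one₀ (Complex.exp_ne_zero _)).1 h3).symm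
  -- winding zero from simple connectedness
  have hwind : Deg14.WindZero w := by
    haveI := hsc
    have hγcont : Continuous γ := hγ.continuous
    let x₀ : closure A := ⟨γ 0, hmemA 0⟩
    let Γ : Path x₀ x₀ :=
      { toFun := fun t => ⟨γ (t : ℝ), hmemA _⟩
        continuous_toFun := Continuous.subtype_mk (hγcont.comp continuous_subtype_val) _
        source' := rfl
        target' := Subtype.ext (by simp [hγ10]; rfl) }
    obtain ⟨H⟩ := SimplyConnectedSpace.paths_homotopic Γ (Path.refl x₀)
    let Φ : unitInterval × unitInterval → ℂ := fun q => u ((H q : closure A) : ℂ)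
    have hΦcont : Continuous Φ :=
      hu.continuousOn.comp_continuous
        (continuous_subtype_val.comp H.continuous) (fun q => hUA (H q).2)
    have hΦlow : ∀ q, α ≤ ‖Φ q‖ := fun q => hlow _ (H q).2
    have hΦuc : UniformContinuous Φ := CompactSpace.uniformContinuous_of_continuous hΦcont
    obtain ⟨δ, hδpos, hδ⟩ := Metric.uniformContinuous_iff.1 hΦuc α hα
    obtain ⟨N0, hN0⟩ := exists_nat_one_div_lt hδpos
    set N : ℕ := N0 + 1 with hN
    have hNpos : (0:ℝ) < (N:ℝ) := by positivity
    set pt : ℕ → unitInterval := fun i => Set.projIcc 0 1 zero_le_one ((i:ℝ)/N) with hpt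
    set Λ : ℕ → ℝ → ℂ := fun i t => Φ (pt i, Set.projIcc 0 1 zero_le_one t) with hΛ
    have hΛcont : ∀ i, ContinuousOn (Λ i) (Set.Icc 0 1) := by
      intro i
      exact (hΦcont.comp (continuous_const.prodMk continuous_projIcc)).continuousOn
    have hγ0val : u ((x₀ : closure A) : ℂ) = w 0 := rfl
    have hend : ∀ i, Λ i 1 = Λ i 0 := by
      intro i
      have e1 : Set.projIcc 0 1 zero_le_one (1:ℝ) = (1 : unitInterval) := by
        simp [Set.projIcc_of_mem]
      have e0 : Set.projIcc 0 1 zero_le_one (0:ℝ) = (0 : unitInterval) := by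
        simp [Set.projIcc_of_mem]
      show Φ (pt i, Set.projIcc 0 1 zero_le_one (1:ℝ)) = Φ (pt i, Set.projIcc 0 1 zero_le_one (0:ℝ))
      rw [e1, e0]
      show u ((H (pt i, 1) : closure A) : ℂ) = u ((H (pt i, 0) : closure A) : ℂ)
      rw [H.target (pt i), H.source (pt i)]
    have hbase : Deg14.WindZero (Λ N) := by
      apply Deg14.windZero_congr (p := fun _ => w 0) ?_ (Deg14.windZero_const _ (hw0 0))
      intro t ht
      have hptN : pt N = (1 : unitInterval) := by
        rw [hpt]
        simp only
        rw [div_self hNpos.ne']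
        simp [Set.projIcc_of_mem]
      show w 0 = Φ (pt N, Set.projIcc 0 1 zero_le_one t)
      rw [hptN]
      show w 0 = u ((H (1, Set.projIcc 0 1 zero_le_one t) : closure A) : ℂ)
      rw [H.apply_one]
      rfl
    have hstep : ∀ i : ℕ, Deg14.WindZero (Λ (i+1)) → Deg14.WindZero (Λ i) := by
      intro i hWZ
      refine Deg14.windZero_of_close (hΛcont (i+1)) (hΛcont i) (hend (i+1)) (hend i) ?_ hWZ
      intro t ht
      have hdist1 : dist (pt i) (pt (i+1)) < δ := by
        have h1 : dist (pt i) (pt (i+1)) ≤ dist ((i:ℝ)/N) ((((i+1):ℕ):ℝ)/N) := by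
          have h2 := (LipschitzWith.projIcc (zero_le_one (α := ℝ))).dist_le_mul
            ((i:ℝ)/N) ((((i+1):ℕ):ℝ)/N)
          rw [hpt]
          simpa using h2
        have h2 : dist ((i:ℝ)/N) ((((i+1):ℕ):ℝ)/N) = 1/(N:ℝ) := by
          push_cast
          rw [Real.dist_eq, div_sub_div_same, show (i:ℝ) - ((i:ℝ)+1) = -1 by ring,
            abs_div, abs_neg, abs_one, abs_of_nonneg (by positivity : (0:ℝ) ≤ (N:ℝ))]
        have h3 : 1/(N:ℝ) < δ := by
          rw [hN]; push_cast; exact hN0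
        calc dist (pt i) (pt (i+1)) ≤ 1/(N:ℝ) := h1.trans_eq h2
          _ < δ := h3
      have hdist2 : dist ((pt (i+1), Set.projIcc 0 1 zero_le_one t) : unitInterval × unitInterval)
          (pt i, Set.projIcc 0 1 zero_le_one t) < δ := by
        rw [Prod.dist_eq]
        simp only [dist_self]
        rw [max_eq_left dist_nonneg]
        rw [dist_comm]
        exact hdist1
      have h4 := hδ hdist2
      rw [dist_eq_norm] at h4
      calc ‖Λ i t - Λ (i+1) t‖ < α := by
            rw [show Λ i t - Λ (i+1) t =
              -(Φ (pt (i+1), Set.projIcc 0 1 zero_le_one t)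
                - Φ (pt i, Set.projIcc 0 1 zero_le_one t)) by rw [hΛ]; ring]
            rw [norm_neg]
            exact h4
        _ ≤ ‖Λ (i+1) t‖ := hΦlow _
    have hiter : ∀ m : ℕ, Deg14.WindZero (Λ (N - m)) := by
      intro m
      induction m with
      | zero => simpa using hbase
      | succ m ih =>
        by_cases h : N ≤ m
        · have he : N - (m+1) = N - m := by omega
          rw [he]; exact ih
        · have h2 : N - (m+1) + 1 = N - m := by omega
          exact hstep _ (by rw [h2]; exact ih)
    have h0 := hiter N
    rw [Nat.sub_self] at h0
    refine Deg14.windZero_congr ?_ h0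
    intro t ht
    have hpt0 : pt 0 = (0 : unitInterval) := by
      rw [hpt]
      simp [Set.projIcc_of_mem]
    show Λ 0 t = w t
    rw [hΛ]
    simp only
    rw [hpt0]
    show u ((H (0, Set.projIcc 0 1 zero_le_one t) : closure A) : ℂ) = w t
    rw [H.apply_zero]
    show u (γ ((Set.projIcc 0 1 zero_le_one t : unitInterval) : ℝ)) = w t
    rw [Set.projIcc_of_mem zero_le_one ht]
  -- conclude ψ 1 = ψ 0
  obtain ⟨L, hL, hLe, hL10⟩ := hwind
  have hψ10 : ψ 1 = ψ 0 := by
    have hD : ContinuousOn (fun t => ψ t - L t) (Set.Icc 0 1) :=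
      hψc.continuousOn.sub hL
    have hD1 : ∀ t ∈ Set.Icc (0:ℝ) 1, Complex.exp (ψ t - L t) = 1 := by
      intro t ht
      rw [Complex.exp_sub, hexp t, hLe t ht, div_self (hw0 t)]
    have := Deg14.endpoints_eq hD hD1
    have h2 : ψ 1 - L 1 = ψ 0 - L 0 := this
    have := hL10
    linear_combination h2 + this
  -- the integrand equals Im (f t)
  have hval : ∀ t : ℝ,
      ((starRingEnd ℂ) (u (γ t) / (‖u (γ t)‖ : ℂ)) *
        deriv (fun s : ℝ => u (γ s) / (‖u (γ s)‖ : ℂ)) t).im = (f t).im := by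
    intro t
    -- derivative of the norm
    have hnormd : DifferentiableAt ℝ (fun s => ‖w s‖) t :=
      ((hwC.differentiable one_ne_zero) t).norm ℝ (hw0 t)
    set b : ℝ := deriv (fun s => ‖w s‖) t with hb
    have hnd : HasDerivAt (fun s => ‖w s‖) b t := hnormd.hasDerivAt
    have hnc : HasDerivAt (fun s => ((‖w s‖ : ℝ) : ℂ)) (b : ℂ) t :=
      Complex.ofRealCLM.hasFDerivAt.comp_hasDerivAt t hnd
    have hne : ((‖w t‖ : ℝ) : ℂ) ≠ 0 := by
      simp only [ne_eq, Complex.ofReal_eq_zero, norm_eq_zero]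
      exact hw0 t
    have hdiv : HasDerivAt (fun s : ℝ => w s / ((‖w s‖ : ℝ) : ℂ))
        ((deriv w t * ((‖w t‖ : ℝ) : ℂ) - w t * (b : ℂ)) / ((‖w t‖ : ℝ) : ℂ) ^ 2) t :=
      (hwd t).div hnc hne
    have hfun : (fun s : ℝ => u (γ s) / (‖u (γ s)‖ : ℂ)) =
        (fun s : ℝ => w s / ((‖w s‖ : ℝ) : ℂ)) := rfl
    rw [hfun, hdiv.deriv]
    set a : ℝ := ‖w t‖ with hadef
    set c : ℂ := w t with hc
    set c' : ℂ := deriv w t with hc'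
    have ha0 : a ≠ 0 := by
      rw [hadef]; simp only [ne_eq, norm_eq_zero]; exact hw0 t
    have haC : ((a:ℝ):ℂ) ≠ 0 := by exact_mod_cast ha0
    have hcne : c ≠ 0 := hw0 t
    have hcc : (starRingEnd ℂ) c * c = ((a:ℝ):ℂ)^2 := by
      rw [hc, hadef, Complex.conj_mul']
    have hconj : (starRingEnd ℂ) c = ((a:ℝ):ℂ)^2 / c := by
      rw [eq_div_iff hcne]; exact hcc
    have key : (starRingEnd ℂ) (c / ((a:ℝ):ℂ)) * ((c' * ((a:ℝ):ℂ) - c * ((b:ℝ):ℂ)) / ((a:ℝ):ℂ)^2)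
        = c'/c - (((b/a : ℝ)):ℂ) := by
      rw [map_div₀, Complex.conj_ofReal, hconj]
      push_cast
      field_simp
    rw [key]
    have : (f t) = c'/c := rfl
    rw [this]
    simp [Complex.sub_im]
  -- final computation
  have hint : (∫ t in (0:ℝ)..1,
      ((starRingEnd ℂ) (u (γ t) / (‖u (γ t)‖ : ℂ)) *
        deriv (fun s : ℝ => u (γ s) / (‖u (γ s)‖ : ℂ)) t).im) = 0 := by
    rw [intervalIntegral.integral_congr (g := fun t => (f t).im)
      (fun t _ => hval t)]
    have him : ∀ t : ℝ, HasDerivAt (fun s => (ψ s).im) ((f t).im) t :=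
      fun t => Complex.imCLM.hasFDerivAt.comp_hasDerivAt t (hψd t)
    rw [intervalIntegral.integral_eq_sub_of_hasDerivAt (fun t _ => him t)
      ((Complex.continuous_im.comp hfc).intervalIntegrable 0 1)]
    rw [hψ10]; ring
  rw [hint, mul_zero]
end
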